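/- Let X* be an optimal solution of min_{X∈F_{n,k}} f(X) satisfying the eigen-gap assumption with some parameter δ > 0, i.e., λ_{n−k}(∇f(X*)) − λ_{n−k+1}(∇f(X*)) ≥ δ. Then X* has rank exactly k (so X* ∈ P_{n,k}), and X* is the unique minimizer of f over F_{n,k} (and hence also the unique minimizer of f over P_{n,k}). -/

import Mathlib

open Matrix

noncomputable def frobNorm {m : ℕ} (A : Matrix (Fin m) (Fin m) ℝ) : ℝ :=
  Real.sqrt (∑ i, ∑ j, (A i j) ^ 2)

/-- `eigval A j` is the `j`-th largest eigenvalue (1-indexed) of the symmetric matrix `A`. -/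
noncomputable def eigval {m : ℕ} (A : Matrix (Fin m) (Fin m) ℝ) (j : ℕ) : ℝ :=
  if h : A.IsHermitian then
    if hj : m - j < m then (h.eigenvalues ∘ Tuple.sort h.eigenvalues) ⟨m - j, hj⟩ else 0
  else 0

/-- spectral norm: largest singular value. -/
noncomputable def specNorm {m : ℕ} (A : Matrix (Fin m) (Fin m) ℝ) : ℝ :=
  Real.sqrt (eigval (Aᵀ * A) 1)

/-- `P_{n,k}`: rank-`k` orthogonal projection matrices. -/
def ProjSet (n k : ℕ) : Set (Matrix (Fin n) (Fin n) ℝ) :=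
  {X | ∃ Q : Matrix (Fin n) (Fin k) ℝ, Qᵀ * Q = 1 ∧ X = Q * Qᵀ}

/-- The Fantope `F_{n,k}`. -/
def Fantope (n k : ℕ) : Set (Matrix (Fin n) (Fin n) ℝ) :=
  {X | X.IsSymm ∧ X.PosSemidef ∧ (1 - X).PosSemidef ∧ X.trace = (k : ℝ)}

/-! ### Auxiliary lemmas -/

lemma frobNorm_nonneg' {m : ℕ} (A : Matrix (Fin m) (Fin m) ℝ) : 0 ≤ frobNorm A :=
  Real.sqrt_nonneg _

lemma frobNorm_smul' {m : ℕ} (t : ℝ) (A : Matrix (Fin m) (Fin m) ℝ) :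
    frobNorm (t • A) = |t| * frobNorm A := by
  unfold frobNorm
  rw [← Real.sqrt_sq_eq_abs, ← Real.sqrt_mul (sq_nonneg t)]
  congr 1
  simp [Finset.mul_sum, mul_pow]

lemma trace_mul_le' {m : ℕ} (A B : Matrix (Fin m) (Fin m) ℝ) :
    (A * B).trace ≤ frobNorm A * frobNorm B := by
  have h1 : (A * B).trace = ∑ p : Fin m × Fin m, A p.1 p.2 * B p.2 p.1 := by
    rw [Fintype.sum_prod_type]
    simp [Matrix.trace, Matrix.diag, Matrix.mul_apply]
  have h2 : (∑ p : Fin m × Fin m, A p.1 p.2 * B p.2 p.1) ^ 2 ≤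
      (∑ p : Fin m × Fin m, (A p.1 p.2) ^ 2) * (∑ p : Fin m × Fin m, (B p.2 p.1) ^ 2) :=
    Finset.sum_mul_sq_le_sq_mul_sq _ _ _
  have hA : ∑ p : Fin m × Fin m, (A p.1 p.2) ^ 2 = ∑ i, ∑ j, (A i j) ^ 2 := by
    rw [Fintype.sum_prod_type]
  have hB : ∑ p : Fin m × Fin m, (B p.2 p.1) ^ 2 = ∑ i, ∑ j, (B i j) ^ 2 := by
    rw [Fintype.sum_prod_type, Finset.sum_comm]
  calc (A * B).trace ≤ |(A * B).trace| := le_abs_self _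
    _ = Real.sqrt ((A * B).trace ^ 2) := (Real.sqrt_sq_eq_abs _).symm
    _ ≤ Real.sqrt ((∑ i, ∑ j, (A i j) ^ 2) * (∑ i, ∑ j, (B i j) ^ 2)) := by
        apply Real.sqrt_le_sqrt
        rw [h1, ← hA, ← hB]
        exact h2
    _ = frobNorm A * frobNorm B := by
        unfold frobNorm
        rw [Real.sqrt_mul]
        positivity

lemma psd_smul' {n : ℕ} {A : Matrix (Fin n) (Fin n) ℝ} (hA : A.PosSemidef) {c : ℝ} (hc : 0 ≤ c) :
    (c • A).PosSemidef := by
  rw [posSemidef_iff_dotProduct_mulVec]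
  constructor
  · unfold Matrix.IsHermitian
    rw [conjTranspose_smul, hA.1]
    simp
  · intro x
    rw [smul_mulVec, dotProduct_smul]
    exact mul_nonneg hc (hA.dotProduct_mulVec_nonneg x)

lemma fantope_segment {n k : ℕ} {X Y : Matrix (Fin n) (Fin n) ℝ}
    (hX : X ∈ Fantope n k) (hY : Y ∈ Fantope n k) {t : ℝ} (ht0 : 0 ≤ t) (ht1 : t ≤ 1) :
    X + t • (Y - X) ∈ Fantope n k := by
  obtain ⟨hXs, hXp, hXp', hXt⟩ := hX
  obtain ⟨hYs, hYp, hYp', hYt⟩ := hY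
  have hcomb : X + t • (Y - X) = (1 - t) • X + t • Y := by module
  refine ⟨?_, ?_, ?_, ?_⟩
  · unfold Matrix.IsSymm at *
    rw [hcomb, transpose_add, transpose_smul, transpose_smul, hXs, hYs]
  · rw [hcomb]
    exact (psd_smul' hXp (by linarith)).add (psd_smul' hYp ht0)
  · have h1 : 1 - (X + t • (Y - X)) = (1 - t) • (1 - X) + t • (1 - Y) := by module
    rw [h1]
    exact (psd_smul' hXp' (by linarith)).add (psd_smul' hYp' ht0)
  · rw [hcomb, trace_add, trace_smul, trace_smul, hXt, hYt]
    simp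
    ring

lemma first_order {n k : ℕ} {f : Matrix (Fin n) (Fin n) ℝ → ℝ}
    {grad : Matrix (Fin n) (Fin n) ℝ → Matrix (Fin n) (Fin n) ℝ} {β : ℝ} (hβ : 0 < β)
    (hconv : ∀ X Y : Matrix (Fin n) (Fin n) ℝ, X.IsSymm → Y.IsSymm →
      f X + (grad X * (Y - X)).trace ≤ f Y)
    (hsmooth : ∀ X Y : Matrix (Fin n) (Fin n) ℝ, X.IsSymm → Y.IsSymm →
      frobNorm (grad X - grad Y) ≤ β * frobNorm (X - Y))
    {Xstar : Matrix (Fin n) (Fin n) ℝ} (hXstarMem : Xstar ∈ Fantope n k)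
    (hXstarOpt : ∀ X ∈ Fantope n k, f Xstar ≤ f X) :
    ∀ Y ∈ Fantope n k, 0 ≤ (grad Xstar * (Y - Xstar)).trace := by
  intro Y hY
  set G := grad Xstar with hG
  set D := Y - Xstar with hDdef
  set c := frobNorm D with hcdef
  have hc0 : 0 ≤ c := frobNorm_nonneg' D
  rw [show (0:ℝ) = -0 by ring, neg_le]
  refine le_of_forall_pos_le_add ?_
  intro ε hε
  have hc2 : 0 < β * (c ^ 2 + 1) := by positivity
  set t : ℝ := min 1 (ε / (β * (c ^ 2 + 1))) with htdef
  have ht0 : 0 < t := lt_min one_pos (div_pos hε hc2)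
  have ht1 : t ≤ 1 := min_le_left _ _
  have hXtmem : Xstar + t • D ∈ Fantope n k := fantope_segment hXstarMem hY ht0.le ht1
  set Xt := Xstar + t • D with hXtdef
  have hXts : Xt.IsSymm := hXtmem.1
  have hXss : Xstar.IsSymm := hXstarMem.1
  have h1 : f Xstar ≤ f Xt := hXstarOpt _ hXtmem
  have h2 := hconv Xt Xstar hXts hXss
  have h3 : Xstar - Xt = -(t • D) := by rw [hXtdef]; abel
  have h4 : (grad Xt * (Xstar - Xt)).trace = -(t * (grad Xt * D).trace) := by
    rw [h3, Matrix.mul_neg, trace_neg, Matrix.mul_smul, trace_smul]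
    simp
  have h5 : 0 ≤ (grad Xt * D).trace := by
    have ht : 0 ≤ t * (grad Xt * D).trace := by
      rw [h4] at h2; linarith
    exact nonneg_of_mul_nonneg_right ht ht0
  have h6 : (grad Xt * D).trace = (G * D).trace + ((grad Xt - G) * D).trace := by
    rw [Matrix.sub_mul, trace_sub]; ring
  have h7 : ((grad Xt - G) * D).trace ≤ frobNorm (grad Xt - G) * c := trace_mul_le' _ _
  have h8 : frobNorm (grad Xt - G) ≤ β * frobNorm (Xt - Xstar) := hsmooth _ _ hXts hXss
  have h9 : Xt - Xstar = t • D := by rw [hXtdef]; abel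
  have h10 : frobNorm (Xt - Xstar) = t * c := by
    rw [h9, frobNorm_smul', abs_of_pos ht0]
  have h11 : β * (t * c) * c ≤ ε := by
    have htle : t ≤ ε / (β * (c ^ 2 + 1)) := min_le_right _ _
    calc β * (t * c) * c = t * (β * c ^ 2) := by ring
      _ ≤ (ε / (β * (c ^ 2 + 1))) * (β * c ^ 2) := by
          apply mul_le_mul_of_nonneg_right htle; positivity
      _ ≤ ε := by
          rw [div_mul_eq_mul_div, div_le_iff₀ hc2]
          nlinarith [mul_nonneg hε.le (sq_nonneg c)]
  have h12 : frobNorm (grad Xt - G) * c ≤ β * (t * c) * c := by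
    have h := mul_le_mul_of_nonneg_right h8 hc0
    rw [h10] at h
    linarith [h]
  linarith

lemma psd_row_eq_zero {n : ℕ} {Y : Matrix (Fin n) (Fin n) ℝ} (hY : Y.PosSemidef)
    {i : Fin n} (h : Y i i = 0) (j : Fin n) : Y i j = 0 := by
  have hsym : Y j i = Y i j := by
    have h2 := hY.1
    rw [Matrix.IsHermitian, conjTranspose_eq_transpose_of_trivial] at h2
    conv_lhs => rw [← h2]
    rfl
  by_cases hij : i = j
  · rw [← hij, h]
  by_contra hne
  set t : ℝ := -(Y j j + 1) / (2 * Y i j) with htdef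
  have hq := hY.dotProduct_mulVec_nonneg (Pi.single i t + Pi.single j 1)
  rw [star_trivial] at hq
  have hexp : (Pi.single i t + Pi.single j 1) ⬝ᵥ
      (Y *ᵥ (Pi.single i t + Pi.single j 1)) =
      t * (t * Y i i) + t * Y i j + (t * Y j i + Y j j) := by
    rw [mulVec_add, dotProduct_add, add_dotProduct, add_dotProduct]
    simp only [Matrix.mulVec_single, dotProduct_single, single_dotProduct, mul_one]
    simp only [Pi.smul_apply, Matrix.col_apply, MulOpposite.smul_eq_mul_unop, MulOpposite.unop_op,
      mul_one]
    ring_nf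
  rw [hexp, h, hsym] at hq
  have htv : t * Y i j = -(Y j j + 1) / 2 := by
    rw [htdef]
    field_simp
  rw [mul_zero, mul_zero, zero_add, htv] at hq
  linarith

lemma key_ineq {n k : ℕ} (μ : Fin n → ℝ) (τ : ℝ) (y : Fin n → ℝ)
    (hScard : (Finset.univ.filter (fun i => μ i ≤ τ)).card = k)
    (hy0 : ∀ i, 0 ≤ y i) (hy1 : ∀ i, y i ≤ 1) (hsum : ∑ i, y i = (k : ℝ)) :
    (∑ i ∈ Finset.univ.filter (fun i => μ i ≤ τ), μ i) ≤ ∑ i, μ i * y i ∧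
    ((∑ i, μ i * y i = ∑ i ∈ Finset.univ.filter (fun i => μ i ≤ τ), μ i) →
      ∀ i, y i = if μ i ≤ τ then 1 else 0) := by
  set S := Finset.univ.filter (fun i => μ i ≤ τ) with hSdef
  set g : Fin n → ℝ := fun i => if μ i ≤ τ then (μ i - τ) * (y i - 1) else (μ i - τ) * y i
    with hgdef
  have hg0 : ∀ i, 0 ≤ g i := by
    intro i
    by_cases hi : μ i ≤ τ
    · simp only [hgdef, hi, if_true]
      exact mul_nonneg_of_nonpos_of_nonpos (by linarith) (by linarith [hy1 i])
    · simp only [hgdef, hi, if_false]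
      exact mul_nonneg (by push_neg at hi; linarith) (hy0 i)
  have hgi : ∀ i, g i = (μ i - τ) * y i - (if μ i ≤ τ then μ i - τ else 0) := by
    intro i
    by_cases hi : μ i ≤ τ <;> simp only [hgdef, hi, if_true, if_false] <;> ring
  have hsumg : ∑ i, g i = (∑ i, μ i * y i) - ∑ i ∈ S, μ i := by
    rw [Finset.sum_congr rfl (fun i _ => hgi i), Finset.sum_sub_distrib]
    have e1 : ∑ i, (if μ i ≤ τ then μ i - τ else 0) = ∑ i ∈ S, (μ i - τ) :=
      (Finset.sum_filter _ _).symm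
    have e2 : ∑ i ∈ S, (μ i - τ) = (∑ i ∈ S, μ i) - (k : ℝ) * τ := by
      rw [Finset.sum_sub_distrib, Finset.sum_const, hScard, nsmul_eq_mul]
    have e3 : ∑ i, (μ i - τ) * y i = (∑ i, μ i * y i) - τ * (k : ℝ) := by
      simp_rw [sub_mul]
      rw [Finset.sum_sub_distrib, ← Finset.mul_sum, hsum]
    rw [e1, e2, e3]
    ring
  have hineq : (∑ i ∈ S, μ i) ≤ ∑ i, μ i * y i := by
    have : (0:ℝ) ≤ ∑ i, g i := Finset.sum_nonneg (fun i _ => hg0 i)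
    linarith [hsumg]
  refine ⟨hineq, ?_⟩
  intro heq
  have hzero : ∀ i ∈ Finset.univ, g i = 0 := by
    rw [← Finset.sum_eq_zero_iff_of_nonneg (fun i _ => hg0 i)]
    rw [hsumg, heq, sub_self]
  have hyoff : ∀ i, ¬ (μ i ≤ τ) → y i = 0 := by
    intro i hi
    have h := hzero i (Finset.mem_univ i)
    simp only [hgdef, hi, if_false] at h
    rcases mul_eq_zero.mp h with h | h
    · push_neg at hi; linarith
    · exact h
  have hsplit : (∑ i ∈ S, y i) + ∑ i ∈ Finset.univ.filter (fun i => ¬ (μ i ≤ τ)), y i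
      = ∑ i, y i := Finset.sum_filter_add_sum_filter_not _ _ _
  have hoffzero : ∑ i ∈ Finset.univ.filter (fun i => ¬ (μ i ≤ τ)), y i = 0 := by
    apply Finset.sum_eq_zero
    intro i hi
    exact hyoff i (Finset.mem_filter.mp hi).2
  have hSsum : ∑ i ∈ S, y i = (k : ℝ) := by
    rw [hoffzero] at hsplit
    rw [← hsum, ← hsplit, add_zero]
  have hone : ∀ i ∈ S, (1 : ℝ) - y i = 0 := by
    rw [← Finset.sum_eq_zero_iff_of_nonneg (fun i _ => by linarith [hy1 i])]
    rw [Finset.sum_sub_distrib, Finset.sum_const, hScard, hSsum, nsmul_eq_mul, mul_one, sub_self]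
  intro i
  by_cases hi : μ i ≤ τ
  · have hiS : i ∈ S := Finset.mem_filter.mpr ⟨Finset.mem_univ i, hi⟩
    have := hone i hiS
    simp only [hi, if_true]
    linarith
  · simp [hi, hyoff i hi]

lemma psd_diag_nonneg {n : ℕ} {Y : Matrix (Fin n) (Fin n) ℝ} (hY : Y.PosSemidef) (i : Fin n) :
    0 ≤ Y i i := by
  have := hY.dotProduct_mulVec_nonneg (Pi.single i 1)
  rw [star_trivial] at this
  simpa [Matrix.mulVec_single, single_dotProduct] using this

lemma fantope_coord {n k : ℕ} {U X : Matrix (Fin n) (Fin n) ℝ}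
    (hU1 : Uᴴ * U = 1) (hU2 : U * Uᴴ = 1) (hX : X ∈ Fantope n k) :
    (Uᴴ * X * U).PosSemidef ∧ (1 - Uᴴ * X * U).PosSemidef ∧
      (Uᴴ * X * U).trace = (k : ℝ) := by
  obtain ⟨hs, hp, hp', ht⟩ := hX
  refine ⟨hp.conjTranspose_mul_mul_same U, ?_, ?_⟩
  · have h1 : (1 : Matrix (Fin n) (Fin n) ℝ) - Uᴴ * X * U = Uᴴ * (1 - X) * U := by
      rw [Matrix.mul_sub, Matrix.mul_one, Matrix.sub_mul, hU1]
    rw [h1]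
    exact hp'.conjTranspose_mul_mul_same U
  · rw [Matrix.mul_assoc, trace_mul_comm, Matrix.mul_assoc, hU2, Matrix.mul_one, ht]

lemma projset_mem_fantope {n k : ℕ} {X : Matrix (Fin n) (Fin n) ℝ} (hX : X ∈ ProjSet n k) :
    X ∈ Fantope n k := by
  obtain ⟨Q, hQ1, rfl⟩ := hX
  have hQH : Qᵀ = Qᴴ := (conjTranspose_eq_transpose_of_trivial Q).symm
  refine ⟨?_, ?_, ?_, ?_⟩
  · unfold Matrix.IsSymm
    rw [transpose_mul, transpose_transpose]
  · rw [hQH]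
    exact posSemidef_self_mul_conjTranspose Q
  · have hid : (1 - Q * Qᵀ)ᴴ * (1 - Q * Qᵀ) = 1 - Q * Qᵀ := by
      have hsymm : (1 - Q * Qᵀ)ᴴ = 1 - Q * Qᵀ := by
        rw [conjTranspose_sub, conjTranspose_one, conjTranspose_mul, ← hQH,
          conjTranspose_eq_transpose_of_trivial, transpose_transpose]
      rw [hsymm, Matrix.mul_sub, Matrix.mul_one, Matrix.sub_mul, Matrix.one_mul]
      have : Q * Qᵀ * (Q * Qᵀ) = Q * Qᵀ := by
        rw [Matrix.mul_assoc, ← Matrix.mul_assoc Qᵀ, hQ1, Matrix.one_mul]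
      rw [this]
      abel
    rw [← hid]
    exact posSemidef_conjTranspose_mul_self _
  · rw [trace_mul_comm, hQ1, trace_one]
    simp

theorem stmt0 {n k : ℕ} (hk : 0 < k) (hkn : k < n)
    (f : Matrix (Fin n) (Fin n) ℝ → ℝ)
    (grad : Matrix (Fin n) (Fin n) ℝ → Matrix (Fin n) (Fin n) ℝ)
    (β : ℝ) (hβ : 0 < β)
    (hgradSymm : ∀ X : Matrix (Fin n) (Fin n) ℝ, (grad X).IsSymm)
    (hconv : ∀ X Y : Matrix (Fin n) (Fin n) ℝ, X.IsSymm → Y.IsSymm →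
      f X + (grad X * (Y - X)).trace ≤ f Y)
    (hsmooth : ∀ X Y : Matrix (Fin n) (Fin n) ℝ, X.IsSymm → Y.IsSymm →
      frobNorm (grad X - grad Y) ≤ β * frobNorm (X - Y))
    (Xstar : Matrix (Fin n) (Fin n) ℝ)
    (hXstarMem : Xstar ∈ Fantope n k)
    (hXstarOpt : ∀ X ∈ Fantope n k, f Xstar ≤ f X)
    (δ : ℝ) (hδ : 0 < δ)
    (hgap : δ ≤ eigval (grad Xstar) (n - k) - eigval (grad Xstar) (n - k + 1))
    :
    Xstar.rank = k ∧ Xstar ∈ ProjSet n k ∧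
      (∀ X ∈ Fantope n k, X ≠ Xstar → f Xstar < f X) ∧
      (∀ X ∈ ProjSet n k, X ≠ Xstar → f Xstar < f X) := by
  classical
  set G := grad Xstar with hGdef
  have hGsym : G.IsSymm := hgradSymm Xstar
  have hG : G.IsHermitian := by
    rw [Matrix.IsHermitian, conjTranspose_eq_transpose_of_trivial]
    exact hGsym
  set μ : Fin n → ℝ := hG.eigenvalues with hμdef
  set σ := Tuple.sort μ with hσdef
  have hmono : Monotone (μ ∘ σ) := Tuple.monotone_sort μ
  have hk1 : k - 1 < n := by omega
  set τ : ℝ := μ (σ ⟨k - 1, hk1⟩) with hτdef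
  -- translate the eigen-gap hypothesis
  have hgap' : τ + δ ≤ μ (σ ⟨k, hkn⟩) := by
    have hj1 : n - (n - k) < n := by omega
    have hj2 : n - (n - k + 1) < n := by omega
    have e1 : eigval G (n - k) = μ (σ ⟨k, hkn⟩) := by
      rw [eigval, dif_pos hG, dif_pos hj1]
      have hidx : (⟨n - (n - k), hj1⟩ : Fin n) = ⟨k, hkn⟩ := by
        simp only [Fin.mk.injEq]; omega
      rw [hidx]
      rfl
    have e2 : eigval G (n - k + 1) = τ := by
      rw [eigval, dif_pos hG, dif_pos hj2]
      have hidx : (⟨n - (n - k + 1), hj2⟩ : Fin n) = ⟨k - 1, hk1⟩ := by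
        simp only [Fin.mk.injEq]; omega
      rw [hidx, hτdef]
      rfl
    rw [e1, e2] at hgap
    linarith
  set S : Finset (Fin n) := Finset.univ.filter (fun i => μ i ≤ τ) with hSdef
  have hScard : S.card = k := by
    have hcard1 : Fintype.card {j // (μ ∘ σ) j ≤ τ} = k := by
      have hub : Fintype.card {j // (μ ∘ σ) j ≤ τ} ≤ k := by
        by_contra hlt
        push_neg at hlt
        have hlt' : (⟨k, hkn⟩ : Fin n) < Fintype.card {j // (μ ∘ σ) j ≤ τ} := by
          simpa using hlt
        have := (Tuple.lt_card_le_iff_apply_le_of_monotone (a := τ) (j := ⟨k, hkn⟩) hmono).mp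
          (by rw [← Fintype.card_subtype]; exact hlt')
        simp only [Function.comp_apply] at this
        linarith
      have hlb : k ≤ Fintype.card {j // (μ ∘ σ) j ≤ τ} := by
        have h := (Tuple.lt_card_le_iff_apply_le_of_monotone (a := τ) (j := ⟨k - 1, hk1⟩) hmono).mpr
          (by simp [hτdef])
        have h' : k - 1 < Fintype.card {j // (μ ∘ σ) j ≤ τ} := by rw [Fintype.card_subtype]; simpa using h
        omega
      omega
    have hcard2 : Fintype.card {i // μ i ≤ τ} = Fintype.card {j // (μ ∘ σ) j ≤ τ} :=
      Fintype.card_congr (Equiv.subtypeEquiv σ.symm (fun i => by simp))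
    rw [hSdef, ← Fintype.card_subtype]
    rw [hcard2, hcard1]
  -- spectral decomposition
  set U : Matrix (Fin n) (Fin n) ℝ := (hG.eigenvectorUnitary : Matrix (Fin n) (Fin n) ℝ)
    with hUdef
  have hU1 : Uᴴ * U = 1 := by
    have h := Matrix.mem_unitaryGroup_iff'.mp (hG.eigenvectorUnitary).2
    rwa [star_eq_conjTranspose] at h
  have hU2 : U * Uᴴ = 1 := by
    have h := Matrix.mem_unitaryGroup_iff.mp (hG.eigenvectorUnitary).2
    rwa [star_eq_conjTranspose] at h
  have hspec : G = U * Matrix.diagonal μ * Uᴴ := by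
    have h := hG.spectral_theorem
    rwa [Unitary.conjStarAlgAut_apply, RCLike.ofReal_real_eq_id, Function.id_comp, star_eq_conjTranspose] at h
  -- trace formula
  have htr : ∀ X : Matrix (Fin n) (Fin n) ℝ,
      (G * X).trace = ∑ i, μ i * (Uᴴ * X * U) i i := by
    intro X
    calc (G * X).trace = (U * (Matrix.diagonal μ * (Uᴴ * X))).trace := by
          rw [hspec]; simp only [Matrix.mul_assoc]
      _ = ((Matrix.diagonal μ * (Uᴴ * X)) * U).trace := trace_mul_comm _ _
      _ = (Matrix.diagonal μ * (Uᴴ * X * U)).trace := by simp only [Matrix.mul_assoc]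
      _ = ∑ i, μ i * (Uᴴ * X * U) i i := by
          simp [Matrix.trace, Matrix.diag, Matrix.diagonal_mul]
  set m : ℝ := ∑ i ∈ S, μ i with hmdef
  -- lower bound and equality characterization
  have hbound : ∀ X ∈ Fantope n k, m ≤ (G * X).trace ∧
      ((G * X).trace = m → ∀ i, (Uᴴ * X * U) i i = if μ i ≤ τ then 1 else 0) := by
    intro X hX
    obtain ⟨hWpsd, hWpsd', hWtr⟩ := fantope_coord hU1 hU2 hX
    set W := Uᴴ * X * U with hWdef
    have hy0 : ∀ i, 0 ≤ W i i := psd_diag_nonneg hWpsd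
    have hy1 : ∀ i, W i i ≤ 1 := by
      intro i
      have := psd_diag_nonneg hWpsd' i
      simp only [Matrix.sub_apply, Matrix.one_apply_eq] at this
      linarith
    have hsum : ∑ i, W i i = (k : ℝ) := hWtr
    have hkey := key_ineq μ τ (fun i => W i i) hScard hy0 hy1 hsum
    constructor
    · rw [htr X]; exact hkey.1
    · intro heq
      apply hkey.2
      rw [← htr X, heq]
  -- the candidate projection
  set d : Fin n → ℝ := fun i => if μ i ≤ τ then 1 else 0 with hddef
  set P : Matrix (Fin n) (Fin n) ℝ := U * Matrix.diagonal d * Uᴴ with hPdef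
  have hPsymm : P.IsSymm := by
    unfold Matrix.IsSymm
    rw [hPdef, conjTranspose_eq_transpose_of_trivial, transpose_mul, transpose_mul,
      transpose_transpose, diagonal_transpose, Matrix.mul_assoc]
  have hd0 : ∀ i, 0 ≤ d i := by intro i; rw [hddef]; dsimp only; split <;> norm_num
  have hd1 : ∀ i, d i ≤ 1 := by intro i; rw [hddef]; dsimp only; split <;> norm_num
  have hPF : P ∈ Fantope n k := by
    refine ⟨hPsymm, ?_, ?_, ?_⟩
    · exact (Matrix.PosSemidef.diagonal hd0).mul_mul_conjTranspose_same U
    · have h1 : (1 : Matrix (Fin n) (Fin n) ℝ) - P =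
          U * Matrix.diagonal (fun i => 1 - d i) * Uᴴ := by
        rw [hPdef]
        have : Matrix.diagonal (fun i => 1 - d i) =
            1 - Matrix.diagonal d := by
          rw [← diagonal_one, diagonal_sub]
        rw [this, Matrix.mul_sub, Matrix.mul_one, Matrix.sub_mul, hU2]
      rw [h1]
      exact (Matrix.PosSemidef.diagonal
        (fun i => by have := hd1 i; simp only [Pi.zero_apply]; linarith)).mul_mul_conjTranspose_same U
    · rw [hPdef, Matrix.mul_assoc, trace_mul_comm, Matrix.mul_assoc, hU1, Matrix.mul_one,
        trace_diagonal]
      simp only [hddef]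
      rw [← Finset.sum_filter, ← hSdef, Finset.sum_const, hScard, nsmul_eq_mul, mul_one]
  have hUPU : Uᴴ * P * U = Matrix.diagonal d := by
    rw [hPdef, Matrix.mul_assoc, Matrix.mul_assoc, hU1, Matrix.mul_one, ← Matrix.mul_assoc, hU1,
      Matrix.one_mul]
  have htraceP : (G * P).trace = m := by
    rw [htr P, hUPU, hmdef]
    have : ∀ i, μ i * (Matrix.diagonal d) i i = if μ i ≤ τ then μ i else 0 := by
      intro i
      rw [Matrix.diagonal_apply_eq, hddef]
      dsimp only
      split <;> ring
    rw [Finset.sum_congr rfl (fun i _ => this i), ← Finset.sum_filter]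
  -- uniqueness of the linear minimizer
  have huniq : ∀ X ∈ Fantope n k, (G * X).trace = m → X = P := by
    intro X hX heq
    obtain ⟨hWpsd, hWpsd', hWtr⟩ := fantope_coord hU1 hU2 hX
    have hdiag := (hbound X hX).2 heq
    have hW : Uᴴ * X * U = Matrix.diagonal d := by
      ext i j
      by_cases hi : μ i ≤ τ
      · have h1 : (1 - Uᴴ * X * U) i i = 0 := by
          rw [Matrix.sub_apply, Matrix.one_apply_eq, hdiag i, if_pos hi]
          ring
        have h2 : (1 - Uᴴ * X * U) i j = 0 := psd_row_eq_zero hWpsd' h1 j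
        simp only [Matrix.sub_apply] at h2
        have h3 : (Uᴴ * X * U) i j = (1 : Matrix (Fin n) (Fin n) ℝ) i j := by linarith
        rw [h3, hddef]
        by_cases hij : i = j
        · subst hij; simp [Matrix.one_apply_eq, Matrix.diagonal_apply_eq, hi]
        · simp [Matrix.one_apply_ne hij, Matrix.diagonal_apply_ne _ hij]
      · have h1 : (Uᴴ * X * U) i i = 0 := by
          rw [hdiag i]; simp [hi]
        have h2 : (Uᴴ * X * U) i j = 0 := psd_row_eq_zero hWpsd h1 j
        rw [h2, hddef]
        by_cases hij : i = j
        · subst hij; simp [Matrix.diagonal_apply_eq, hi]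
        · simp [Matrix.diagonal_apply_ne _ hij]
    have hXrec : X = U * (Uᴴ * X * U) * Uᴴ := by
      rw [Matrix.mul_assoc, Matrix.mul_assoc, hU2]
      rw [Matrix.mul_one, ← Matrix.mul_assoc, hU2, Matrix.one_mul]
    rw [hXrec, hW, ← hPdef]
  -- first-order optimality
  have hfo := first_order hβ hconv hsmooth hXstarMem hXstarOpt
  have hXm : (G * Xstar).trace = m := by
    have hge : m ≤ (G * Xstar).trace := (hbound Xstar hXstarMem).1
    have hle : (G * Xstar).trace ≤ m := by
      have h := hfo P hPF
      rw [Matrix.mul_sub, trace_sub] at h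
      rw [htraceP] at h
      linarith
    linarith
  have hXP : Xstar = P := huniq Xstar hXstarMem hXm
  -- construct Q
  have hcardS : Fintype.card {x // x ∈ S} = k := by rw [Fintype.card_coe, hScard]
  set ecard : Fin k ≃ {x // x ∈ S} := (Fintype.equivFinOfCardEq hcardS).symm with hecard
  set gmap : Fin k → Fin n := fun a => (ecard a : Fin n) with hgmap
  have hginj : Function.Injective gmap := by
    intro a b h
    exact ecard.injective (Subtype.ext h)
  set Q : Matrix (Fin n) (Fin k) ℝ := U.submatrix id gmap with hQdef
  have hUtU : Uᵀ * U = 1 := by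
    rw [← conjTranspose_eq_transpose_of_trivial]
    exact hU1
  have hQ1 : Qᵀ * Q = 1 := by
    ext a b
    have h1 : (Qᵀ * Q) a b = (Uᵀ * U) (gmap a) (gmap b) := by
      simp [Matrix.mul_apply, hQdef, Matrix.submatrix_apply]
    rw [h1, hUtU]
    by_cases hab : a = b
    · subst hab; simp [Matrix.one_apply_eq]
    · rw [Matrix.one_apply_ne (fun h => hab (hginj h)), Matrix.one_apply_ne hab]
  have hQ2 : Q * Qᵀ = P := by
    ext i j
    have h1 : (Q * Qᵀ) i j = ∑ a, U i (gmap a) * U j (gmap a) := by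
      simp [Matrix.mul_apply, hQdef, Matrix.submatrix_apply]
    have h2 : P i j = ∑ s, U i s * d s * U j s := by
      rw [hPdef, Matrix.mul_apply]
      apply Finset.sum_congr rfl
      intro s _
      rw [Matrix.mul_diagonal, conjTranspose_apply, star_trivial]
    rw [h1, h2]
    have h3 : ∀ s, U i s * d s * U j s = if μ s ≤ τ then U i s * U j s else 0 := by
      intro s
      rw [hddef]
      dsimp only
      split <;> ring
    rw [Finset.sum_congr rfl (fun s _ => h3 s), ← Finset.sum_filter, ← hSdef]
    rw [← Finset.sum_coe_sort S (fun s => U i s * U j s)]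
    rw [← Equiv.sum_comp ecard (fun x => U i (x : Fin n) * U j (x : Fin n))]
  have hXQQ : Xstar = Q * Qᵀ := by rw [hXP, hQ2]
  -- rank
  have hrank : Xstar.rank = k := by
    rw [hXQQ, Matrix.rank_self_mul_transpose]
    have hle : Q.rank ≤ k := Matrix.rank_le_width Q
    have hge : k ≤ Q.rank := by
      have h := Matrix.rank_mul_le_right Qᵀ Q
      rw [hQ1] at h
      rw [Matrix.rank_one] at h
      simpa using h
    omega
  -- strict minimality over the Fantope
  have hstrict : ∀ X ∈ Fantope n k, X ≠ Xstar → f Xstar < f X := by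
    intro X hX hne
    rcases lt_or_eq_of_le (hXstarOpt X hX) with h | h
    · exact h
    · exfalso
      have hc := hconv Xstar X hXstarMem.1 hX.1
      rw [← h] at hc
      have h0 : (G * (X - Xstar)).trace ≤ 0 := by linarith
      have h0' : 0 ≤ (G * (X - Xstar)).trace := hfo X hX
      have hXtr : (G * X).trace = m := by
        have hexp : (G * (X - Xstar)).trace = (G * X).trace - (G * Xstar).trace := by
          rw [Matrix.mul_sub, trace_sub]
        have : (G * (X - Xstar)).trace = 0 := le_antisymm h0 h0'
        rw [hexp] at this
        linarith
      exact hne (by rw [huniq X hX hXtr, ← hXP])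
  exact ⟨hrank, ⟨Q, hQ1, hXQQ⟩, hstrict,
    fun X hX hne => hstrict X (projset_mem_fantope hX) hne⟩
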